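/- Let A⊂ℝⁿ be bounded and open, let R>0, and let ρ>0. Then the ℝ^{m×n}-valued function (x,μ)↦μ(A∩B_ρ(x)) is B(A)⊗B(M^R_A)-measurable, where M^R_A carries the weak* topology. -/

import Mathlib

open MeasureTheory Filter Topology ENNReal Metric

noncomputable section
open Classical

/-! ### Basic geometric objects -/

/-- Euclidean space `ℝⁿ`. -/
abbrev Rn (n : ℕ) := EuclideanSpace ℝ (Fin n)

/-- Euclidean (Frobenius) norm of a matrix `ξ ∈ ℝ^{m×n}`. -/
def matNorm {m n : ℕ} (ξ : Fin m → Fin n → ℝ) : ℝ := Real.sqrt (∑ i, ∑ j, (ξ i j)^2)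

/-- Application of a matrix `ξ ∈ ℝ^{m×n}` to a vector. -/
def matApply {m n : ℕ} (ξ : Fin m → Fin n → ℝ) (w : Rn n) : Rn m := WithLp.toLp 2 (fun i => ∑ j, ξ i j * w j)

/-- The linear function `ℓ_ξ(x) := ξ x`. -/
def lin {n m : ℕ} (ξ : Fin m → Fin n → ℝ) : Rn n → Rn m := fun x => WithLp.toLp 2 (fun i => ∑ j, ξ i j * x j)

/-- The embedding of `ℤⁿ` in `ℝⁿ`. -/
def zvec {n : ℕ} (z : Fin n → ℤ) : Rn n := WithLp.toLp 2 (fun i => (z i : ℝ))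

/-- The open coordinate cube `Q_t(y)` of side `t` centred at `y`. -/
def Qcube {n : ℕ} (t : ℝ) (y : Rn n) : Set (Rn n) := {z | ∀ i, |z i - y i| < t/2}

/-- The piecewise constant jump datum `u_{x,ζ,ν}`. -/
def pcDatum {n m : ℕ} (x : Rn n) (ζ : Rn m) (ν : Rn n) : Rn n → Rn m :=
  fun y => if 0 ≤ (inner ℝ (y - x) ν : ℝ) then ζ else 0

/-- A vector with rational coordinates. -/
def IsRatVec {n : ℕ} (x : Rn n) : Prop := ∀ i, ∃ q : ℚ, x i = (q : ℝ)

/-- The largest index `i` with `x i ≠ 0` (junk value `0` for `x = 0`). -/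
def lastNZ {n : ℕ} [NeZero n] (x : Rn n) : Fin n :=
  if h : (Finset.univ.filter fun i => x i ≠ 0).Nonempty then
    (Finset.univ.filter fun i => x i ≠ 0).max' h
  else 0

/-- The hemisphere `Ŝ^{n-1}_+ = {x ∈ S^{n-1} : x_{i(x)} > 0}`. -/
def hemiP (n : ℕ) [NeZero n] : Set (Rn n) := {x | ‖x‖ = 1 ∧ 0 < x (lastNZ x)}

/-- The hemisphere `Ŝ^{n-1}_-`. -/
def hemiM (n : ℕ) [NeZero n] : Set (Rn n) := {x | ‖x‖ = 1 ∧ x (lastNZ x) < 0}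

/-- A fixed family of rotations `ν ↦ R_ν` with `R_ν e_n = ν`, continuous on the
hemispheres `Ŝ^{n-1}_±`, with `R_{-ν} Q(0) = R_ν Q(0)`, and mapping rational
vectors to rational vectors when `ν` is rational (cf. (k) in Section 2). -/
structure RotFamily (n : ℕ) [NeZero n] where
  R : Rn n → (Rn n ≃ₗᵢ[ℝ] Rn n)
  maps_en : ∀ ν : Rn n, ‖ν‖ = 1 →
    R ν (EuclideanSpace.single (⟨n-1, Nat.sub_lt (NeZero.pos n) one_pos⟩ : Fin n) (1:ℝ)) = ν
  cube_symm : ∀ ν : Rn n, ‖ν‖ = 1 → (R (-ν)) '' (Qcube 1 0) = (R ν) '' (Qcube 1 0)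
  contP : ∀ v : Rn n, ContinuousOn (fun ν => R ν v) (hemiP n)
  contM : ∀ v : Rn n, ContinuousOn (fun ν => R ν v) (hemiM n)
  rat : ∀ ν : Rn n, ‖ν‖ = 1 → IsRatVec ν → ∀ v, IsRatVec v → IsRatVec (R ν v)

/-- The oriented cube `Q^ν_t(y) := R_ν Q_t(0) + y`. -/
def Qnu {n : ℕ} [NeZero n] (Rot : RotFamily n) (ν : Rn n) (t : ℝ) (y : Rn n) : Set (Rn n) :=
  (fun z => y + Rot.R ν z) '' Qcube t 0

/-- `u = w` a.e. in a neighbourhood of `∂A`. -/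
def EqNearBdry {n m : ℕ} (u w : Rn n → Rn m) (A : Set (Rn n)) : Prop :=
  ∃ U : Set (Rn n), IsOpen U ∧ frontier A ⊆ U ∧ ∀ᵐ x, x ∈ U → u x = w x

/-! ### Sobolev functions and the volume functional -/

/-- `V` is a weak (distributional) derivative of `u` on `A`. -/
def HasWeakDerivOn {n m : ℕ} (u : Rn n → Rn m) (V : Rn n → Fin m → Fin n → ℝ)
    (A : Set (Rn n)) : Prop :=
  (∀ i j, IntegrableOn (fun x => V x i j) A volume) ∧
  ∀ φ : Rn n → ℝ, ContDiff ℝ 1 φ → HasCompactSupport φ → tsupport φ ⊆ A →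
    ∀ i j, ∫ x in A, u x i * fderiv ℝ φ x (EuclideanSpace.single j (1:ℝ)) =
      - ∫ x in A, V x i j * φ x

/-- `u|_A ∈ W^{1,p}(A,ℝ^m)`. -/
def MemW1p {n m : ℕ} (p : ℝ) (u : Rn n → Rn m) (A : Set (Rn n)) : Prop :=
  MemLp u (ENNReal.ofReal p) (volume.restrict A) ∧
  ∃ V, HasWeakDerivOn u V A ∧
    MemLp (fun x => matNorm (V x)) (ENNReal.ofReal p) (volume.restrict A)

/-- A choice of weak derivative of `u` on `A` (junk value `0` if none exists). -/
def wDeriv {n m : ℕ} (u : Rn n → Rn m) (A : Set (Rn n)) : Rn n → Fin m → Fin n → ℝ :=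
  if h : ∃ V, HasWeakDerivOn u V A then h.choose else fun _ _ _ => 0

/-- The volume functional `F(u,A)`, with value `∞` outside `W^{1,p}`. -/
def volF {n m : ℕ} (p : ℝ) (f : Rn n → (Fin m → Fin n → ℝ) → ℝ)
    (u : Rn n → Rn m) (A : Set (Rn n)) : ℝ≥0∞ :=
  if MemW1p p u A then ∫⁻ x in A, ENNReal.ofReal (f x (wDeriv u A x)) else ⊤

/-- The Dirichlet minimum value `m^{1,p}_F(w,A)`. -/
def mF {n m : ℕ} (p : ℝ) (f : Rn n → (Fin m → Fin n → ℝ) → ℝ)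
    (w : Rn n → Rn m) (A : Set (Rn n)) : ℝ≥0∞ :=
  ⨅ (u : Rn n → Rn m) (_ : MemW1p p u A ∧ EqNearBdry u w A), volF p f u A

/-! ### Jump sets, `SBV` functions and the surface functional -/

/-- `(a,b,ν)` is an approximate jump triple of `u` at `x`. -/
def ApproxJump {n m : ℕ} (u : Rn n → Rn m) (x : Rn n) (a b : Rn m) (ν : Rn n) : Prop :=
  ‖ν‖ = 1 ∧ a ≠ b ∧
  Tendsto (fun ρ : ℝ =>
      (volume (ball x ρ))⁻¹ *
        ∫⁻ y in {y ∈ ball x ρ | 0 < (inner ℝ (y - x) ν : ℝ)}, ENNReal.ofReal ‖u y - a‖)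
    (𝓝[>] (0:ℝ)) (𝓝 0) ∧
  Tendsto (fun ρ : ℝ =>
      (volume (ball x ρ))⁻¹ *
        ∫⁻ y in {y ∈ ball x ρ | (inner ℝ (y - x) ν : ℝ) < 0}, ENNReal.ofReal ‖u y - b‖)
    (𝓝[>] (0:ℝ)) (𝓝 0)

/-- The (approximate) jump set `S_u`. -/
def jumpSet {n m : ℕ} (u : Rn n → Rn m) : Set (Rn n) := {x | ∃ a b ν, ApproxJump u x a b ν}

/-- A choice of jump triple `(u⁺, u⁻, ν_u)` at `x`. -/
def jumpTriple {n m : ℕ} (u : Rn n → Rn m) (x : Rn n) : Rn m × Rn m × Rn n :=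
  if h : ∃ q : Rn m × Rn m × Rn n, ApproxJump u x q.1 q.2.1 q.2.2 then h.choose else (0, 0, 0)

/-- The jump `[u] := u⁺ - u⁻` of `u` at `x`. -/
def jump {n m : ℕ} (u : Rn n → Rn m) (x : Rn n) : Rn m :=
  (jumpTriple u x).1 - (jumpTriple u x).2.1

/-- The approximate normal `ν_u` to `S_u` at `x`. -/
def jnormal {n m : ℕ} (u : Rn n → Rn m) (x : Rn n) : Rn n := (jumpTriple u x).2.2

/-- `u` is approximately differentiable at `x` with approximate differential `V`. -/
def ApproxDiffAt {n m : ℕ} (u : Rn n → Rn m) (x : Rn n) (V : Fin m → Fin n → ℝ) : Prop :=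
  ∀ δ > (0:ℝ), Tendsto (fun ρ : ℝ =>
      volume {y ∈ ball x ρ | δ * ‖y - x‖ < ‖u y - u x - matApply V (y - x)‖} / volume (ball x ρ))
    (𝓝[>] (0:ℝ)) (𝓝 0)

/-- The approximate gradient `∇u` (junk value `0` where it does not exist). -/
def aGrad {n m : ℕ} (u : Rn n → Rn m) (x : Rn n) : Fin m → Fin n → ℝ :=
  if h : ∃ V, ApproxDiffAt u x V then h.choose else fun _ _ => 0

/-- `u|_A ∈ SBV(A,ℝ^m)`: the distributional derivative of `u` on `A` is the sum of
the absolutely continuous part `∇u·𝓛ⁿ` and of the jump part `[u]⊗ν_u·𝓗^{n-1}⌞S_u`. -/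
def MemSBV {n m : ℕ} (u : Rn n → Rn m) (A : Set (Rn n)) : Prop :=
  IntegrableOn u A volume ∧
  (∀ i j, IntegrableOn (fun x => aGrad u x i j) A volume) ∧
  ∀ φ : Rn n → ℝ, ContDiff ℝ 1 φ → HasCompactSupport φ → tsupport φ ⊆ A →
    ∀ i j, ∫ x in A, u x i * fderiv ℝ φ x (EuclideanSpace.single j (1:ℝ)) =
      - ∫ x in A, aGrad u x i j * φ x
      - ∫ x in jumpSet u ∩ A, (jump u x i) * (jnormal u x j) * φ x ∂(μH[(n-1 : ℝ)])

/-- `u|_A ∈ SBV_pc(A,ℝ^m)`: `u ∈ SBV`, `∇u = 0` a.e., and `𝓗^{n-1}(S_u) < ∞`. -/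
def MemSBVpc {n m : ℕ} (u : Rn n → Rn m) (A : Set (Rn n)) : Prop :=
  MemSBV u A ∧ (∀ᵐ x ∂volume.restrict A, aGrad u x = fun _ _ => 0) ∧
    μH[(n-1 : ℝ)] (jumpSet u ∩ A) < ⊤

/-- `u|_A ∈ SBV^p(A,ℝ^m)`. -/
def MemSBVp {n m : ℕ} (p : ℝ) (u : Rn n → Rn m) (A : Set (Rn n)) : Prop :=
  MemSBV u A ∧ MemLp (fun x => matNorm (aGrad u x)) (ENNReal.ofReal p) (volume.restrict A) ∧
    μH[(n-1 : ℝ)] (jumpSet u ∩ A) < ⊤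

/-- `u|_A ∈ GSBV^p(A,ℝ^m)`. -/
def MemGSBVp {n m : ℕ} (p : ℝ) (u : Rn n → Rn m) (A : Set (Rn n)) : Prop :=
  Measurable u ∧
  ∀ ψ : Rn m → Rn m, ContDiff ℝ 1 ψ → HasCompactSupport ψ → MemSBVp p (ψ ∘ u) A

/-- The surface functional `G(u,A)` (on `SBV`-type functions; `∞` on the rest). -/
def surfE {n m : ℕ} (g : Rn n → Rn m → Rn n → ℝ) (u : Rn n → Rn m) (A : Set (Rn n)) : ℝ≥0∞ :=
  ∫⁻ x in jumpSet u ∩ A, ENNReal.ofReal (g x (jump u x) (jnormal u x)) ∂(μH[(n-1 : ℝ)])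

/-- The Dirichlet minimum value `m^{pc}_G(w,A)`. -/
def mG {n m : ℕ} (g : Rn n → Rn m → Rn n → ℝ) (w : Rn n → Rn m) (A : Set (Rn n)) : ℝ≥0∞ :=
  ⨅ (u : Rn n → Rn m) (_ : MemSBVpc u A ∧ EqNearBdry u w A), surfE g u A

/-! ### Integrand classes and stationary random integrands -/

/-- A nondecreasing continuous modulus of continuity vanishing at `0`. -/
def IsModulus (σ : ℝ → ℝ) : Prop := Continuous σ ∧ Monotone σ ∧ σ 0 = 0 ∧ ∀ t, 0 ≤ σ t

/-- The class `𝓕 = 𝓕(p,c₁,c₂,σ₁)` of volume integrands. -/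
def IsVolumeIntegrand {n m : ℕ} (p c₁ c₂ : ℝ) (σ₁ : ℝ → ℝ)
    (f : Rn n → (Fin m → Fin n → ℝ) → ℝ) : Prop :=
  Measurable (fun q : Rn n × (Fin m → Fin n → ℝ) => f q.1 q.2) ∧
  (∀ x ξ, 0 ≤ f x ξ) ∧
  (∀ x ξ₁ ξ₂, |f x ξ₁ - f x ξ₂| ≤ σ₁ (matNorm (ξ₁ - ξ₂)) * (1 + f x ξ₁ + f x ξ₂)) ∧
  (∀ x ξ, c₁ * matNorm ξ ^ p ≤ f x ξ) ∧
  (∀ x ξ, f x ξ ≤ c₂ * (1 + matNorm ξ ^ p))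

/-- The class `𝓖 = 𝓖(c₃,c₄,c₅,σ₂)` of surface integrands. -/
def IsSurfaceIntegrand {n m : ℕ} (c₃ c₄ c₅ : ℝ) (σ₂ : ℝ → ℝ)
    (g : Rn n → Rn m → Rn n → ℝ) : Prop :=
  Measurable (fun q : Rn n × Rn m × Rn n => g q.1 q.2.1 q.2.2) ∧
  (∀ x ζ ν, 0 ≤ g x ζ ν) ∧
  (∀ x ν, ‖ν‖ = 1 → ∀ ζ₁ ζ₂ : Rn m, ζ₁ ≠ 0 → ζ₂ ≠ 0 →
      |g x ζ₂ ν - g x ζ₁ ν| ≤ σ₂ ‖ζ₁ - ζ₂‖ * (g x ζ₁ ν + g x ζ₂ ν)) ∧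
  (∀ x ν, ‖ν‖ = 1 → ∀ ζ₁ ζ₂ : Rn m, ζ₁ ≠ 0 → ζ₂ ≠ 0 → ‖ζ₁‖ ≤ ‖ζ₂‖ →
      g x ζ₁ ν ≤ c₃ * g x ζ₂ ν) ∧
  (∀ x ν, ‖ν‖ = 1 → ∀ ζ₁ ζ₂ : Rn m, ζ₁ ≠ 0 → ζ₂ ≠ 0 → c₃ * ‖ζ₁‖ ≤ ‖ζ₂‖ →
      g x ζ₁ ν ≤ g x ζ₂ ν) ∧
  (∀ x ζ ν, ζ ≠ 0 → ‖ν‖ = 1 → c₄ ≤ g x ζ ν) ∧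
  (∀ x ζ ν, ζ ≠ 0 → ‖ν‖ = 1 → g x ζ ν ≤ c₅ * (1 + ‖ζ‖)) ∧
  (∀ x ζ ν, ζ ≠ 0 → ‖ν‖ = 1 → g x ζ ν = g x (-ζ) (-ν))

/-- A group `(τ_z)_{z∈ℤᵏ}` of `P`-preserving transformations on `(Ω,𝒯,P)`. -/
structure PPGroup (Ω : Type*) [MeasurableSpace Ω] (P : Measure Ω) (k : ℕ) where
  τ : (Fin k → ℤ) → Ω → Ω
  measurable : ∀ z, Measurable (τ z)
  bijective : ∀ z, Function.Bijective (τ z)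
  preserving : ∀ z s, MeasurableSet s → P (τ z '' s) = P s
  map_zero : τ 0 = id
  map_add : ∀ z z', τ (z + z') = τ z ∘ τ z'

/-- Ergodicity of a group of `P`-preserving transformations. -/
def PPGroup.IsErgodic {Ω : Type*} [MeasurableSpace Ω] {P : Measure Ω} {k : ℕ}
    (T : PPGroup Ω P k) : Prop :=
  ∀ s, MeasurableSet s → (∀ z, T.τ z '' s = s) → P s = 0 ∨ P s = 1

/-- A stationary random volume integrand. -/
def IsStatRandomVolumeIntegrand {Ω : Type*} [MeasurableSpace Ω] {P : Measure Ω}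
    {n m : ℕ} (p c₁ c₂ : ℝ) (σ₁ : ℝ → ℝ) (T : PPGroup Ω P n)
    (f : Ω → Rn n → (Fin m → Fin n → ℝ) → ℝ) : Prop :=
  Measurable (fun q : Ω × Rn n × (Fin m → Fin n → ℝ) => f q.1 q.2.1 q.2.2) ∧
  (∀ ω, IsVolumeIntegrand p c₁ c₂ σ₁ (f ω)) ∧
  (∀ ω x z ξ, f ω (x + zvec z) ξ = f (T.τ z ω) x ξ)

/-- A stationary random surface integrand. -/
def IsStatRandomSurfaceIntegrand {Ω : Type*} [MeasurableSpace Ω] {P : Measure Ω}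
    {n m : ℕ} (c₃ c₄ c₅ : ℝ) (σ₂ : ℝ → ℝ) (T : PPGroup Ω P n)
    (g : Ω → Rn n → Rn m → Rn n → ℝ) : Prop :=
  Measurable (fun q : Ω × Rn n × Rn m × Rn n => g q.1 q.2.1 q.2.2.1 q.2.2.2) ∧
  (∀ ω, IsSurfaceIntegrand c₃ c₄ c₅ σ₂ (g ω)) ∧
  (∀ ω x z ζ ν, g ω (x + zvec z) ζ ν = g (T.τ z ω) x ζ ν)

/-! ### Bounded `ℝ^{m×n}`-valued Radon measures and the weak* topology -/

/-- `ℝ^{m×n}`-valued measures on `ℝⁿ`. -/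
abbrev VMat (n m : ℕ) := VectorMeasure (Rn n) (Fin m → Fin n → ℝ)

/-- The `(i,j)` component of a matrix-valued measure, as a signed measure. -/
def vComp {n m : ℕ} (μ : VMat n m) (i : Fin m) (j : Fin n) : SignedMeasure (Rn n) :=
  μ.mapRange ((Pi.evalAddMonoidHom (fun _ : Fin n => ℝ) j).comp
      (Pi.evalAddMonoidHom (fun _ : Fin m => Fin n → ℝ) i))
    ((continuous_apply j).comp (continuous_apply i))

/-- A dominating positive measure for `μ`. -/
def vDom {n m : ℕ} (μ : VMat n m) : Measure (Rn n) :=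
  ∑ i, ∑ j, (vComp μ i j).totalVariation

/-- The total variation measure `|μ|` of a matrix-valued measure, with respect to the
Euclidean norm on `ℝ^{m×n}`: it is given by `‖dμ/d|μ|'‖·|μ|'` where `|μ|'` is any
dominating measure. -/
def evar {n m : ℕ} (μ : VMat n m) : Measure (Rn n) :=
  (vDom μ).withDensity fun x =>
    ENNReal.ofReal (Real.sqrt (∑ i, ∑ j, ((vComp μ i j).rnDeriv (vDom μ) x)^2))

/-- The set `M^R_A` of measures concentrated on `A` with total variation at most `R`. -/
def MRAset {n m : ℕ} (A : Set (Rn n)) (R : ℝ) : Set (VMat n m) :=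
  {μ | evar μ Set.univ ≤ ENNReal.ofReal R ∧
    ∀ s : Set (Rn n), MeasurableSet s → s ∩ A = ∅ → μ s = 0}

/-- The space `M^R_A`. -/
def MR (n m : ℕ) (A : Set (Rn n)) (R : ℝ) : Type _ := {μ : VMat n m // μ ∈ MRAset A R}

/-- Integration of a (bounded continuous) function against a signed measure. -/
def sInt {n : ℕ} (σ : SignedMeasure (Rn n)) (φ : Rn n → ℝ) : ℝ :=
  ∫ x, φ x ∂σ.toJordanDecomposition.posPart - ∫ x, φ x ∂σ.toJordanDecomposition.negPart

/-- Test functions for the weak* topology on measures on `A`. -/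
def TestFun {n : ℕ} (A : Set (Rn n)) : Type _ :=
  {φ : Rn n → ℝ // Continuous φ ∧ HasCompactSupport φ ∧ tsupport φ ⊆ A}

/-- The weak* topology on `M^R_A` (induced by the duality with `C₀(A;ℝ^{m×n})`,
equivalently on bounded sets by the duality with compactly supported test functions). -/
instance MR.topologicalSpace (n m : ℕ) (A : Set (Rn n)) (R : ℝ) :
    TopologicalSpace (MR n m A R) :=
  TopologicalSpace.induced
    (fun μ => fun q : Fin m × Fin n × TestFun A => sInt (vComp μ.1 q.1 q.2.1) q.2.2.1)
    inferInstance

/-- The Borel σ-algebra `𝓑(M^R_A)` of the weak* topology. -/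
instance MR.measurableSpace (n m : ℕ) (A : Set (Rn n)) (R : ℝ) :
    MeasurableSpace (MR n m A R) := borel _


/-! ### Auxiliary approximation machinery -/

namespace BallMeasAux

variable {n : ℕ}

/-- Inner approximation of the indicator of `A`. -/
noncomputable def gk (A : Set (Rn n)) (k : ℕ) (y : Rn n) : ℝ :=
  min 1 (max 0 ((k : ℝ) * Metric.infDist y Aᶜ - 1))

/-- Inner approximation of the indicator of `[0,ρ)`. -/
noncomputable def hk (ρ : ℝ) (k : ℕ) (t : ℝ) : ℝ := min 1 (max 0 ((k : ℝ) * (ρ - t)))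

/-- Inner approximation of the indicator of `A ∩ B_ρ(x)`. -/
noncomputable def phik (A : Set (Rn n)) (ρ : ℝ) (k : ℕ) (x y : Rn n) : ℝ :=
  gk A k y * hk ρ k (dist y x)

lemma gk_nonneg (A : Set (Rn n)) (k : ℕ) (y : Rn n) : 0 ≤ gk A k y :=
  le_min zero_le_one (le_max_left _ _)

lemma gk_le_one (A : Set (Rn n)) (k : ℕ) (y : Rn n) : gk A k y ≤ 1 := min_le_left _ _

lemma hk_nonneg (ρ : ℝ) (k : ℕ) (t : ℝ) : 0 ≤ hk ρ k t :=
  le_min zero_le_one (le_max_left _ _)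

lemma hk_le_one (ρ : ℝ) (k : ℕ) (t : ℝ) : hk ρ k t ≤ 1 := min_le_left _ _

lemma phik_nonneg (A : Set (Rn n)) (ρ : ℝ) (k : ℕ) (x y : Rn n) : 0 ≤ phik A ρ k x y :=
  mul_nonneg (gk_nonneg A k y) (hk_nonneg ρ k _)

lemma phik_le_one (A : Set (Rn n)) (ρ : ℝ) (k : ℕ) (x y : Rn n) : phik A ρ k x y ≤ 1 :=
  mul_le_one₀ (gk_le_one A k y) (hk_nonneg ρ k _) (hk_le_one ρ k _)

lemma abs_phik_le_one (A : Set (Rn n)) (ρ : ℝ) (k : ℕ) (x y : Rn n) : |phik A ρ k x y| ≤ 1 := by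
  rw [abs_of_nonneg (phik_nonneg A ρ k x y)]; exact phik_le_one A ρ k x y

lemma continuous_gk (A : Set (Rn n)) (k : ℕ) : Continuous (gk A k) :=
  continuous_const.min (continuous_const.max
    ((continuous_const.mul (Metric.continuous_infDist_pt Aᶜ)).sub continuous_const))

lemma continuous_hk (ρ : ℝ) (k : ℕ) : Continuous (hk ρ k) :=
  continuous_const.min (continuous_const.max
    (continuous_const.mul (continuous_const.sub continuous_id)))

lemma continuous_phik_y (A : Set (Rn n)) (ρ : ℝ) (k : ℕ) (x : Rn n) :
    Continuous (phik A ρ k x) :=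
  (continuous_gk A k).mul ((continuous_hk ρ k).comp (continuous_id.dist continuous_const))

lemma continuous_phik_x (A : Set (Rn n)) (ρ : ℝ) (k : ℕ) (y : Rn n) :
    Continuous fun x => phik A ρ k x y :=
  continuous_const.mul ((continuous_hk ρ k).comp (continuous_const.dist continuous_id))

lemma support_phik (A : Set (Rn n)) (ρ : ℝ) (k : ℕ) (x : Rn n) :
    Function.support (phik A ρ k x) ⊆
      {y : Rn n | (1 : ℝ) ≤ (k : ℝ) * Metric.infDist y Aᶜ} ∩ Metric.closedBall x ρ := by
  intro y hy
  have hg : gk A k y ≠ 0 ∧ hk ρ k (dist y x) ≠ 0 := by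
    constructor <;> intro h0 <;> simp [phik, h0] at hy
  constructor
  · have h1 : (0 : ℝ) < max 0 ((k : ℝ) * Metric.infDist y Aᶜ - 1) := by
      rcases lt_or_eq_of_le (le_max_left 0 ((k : ℝ) * Metric.infDist y Aᶜ - 1)) with h | h
      · exact h
      · exact absurd (by simp [gk, ← h]) hg.1
    have h2 : 0 < (k : ℝ) * Metric.infDist y Aᶜ - 1 := by
      rcases max_cases 0 ((k : ℝ) * Metric.infDist y Aᶜ - 1) with ⟨he, _⟩ | ⟨he, _⟩
      · rw [he] at h1; exact absurd h1 (lt_irrefl 0)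
      · rwa [he] at h1
    show (1 : ℝ) ≤ (k : ℝ) * Metric.infDist y Aᶜ
    linarith
  · have h1 : (0 : ℝ) < max 0 ((k : ℝ) * (ρ - dist y x)) := by
      rcases lt_or_eq_of_le (le_max_left 0 ((k : ℝ) * (ρ - dist y x))) with h | h
      · exact h
      · exact absurd (by simp [hk, ← h]) hg.2
    have h2 : 0 < (k : ℝ) * (ρ - dist y x) := by
      rcases max_cases 0 ((k : ℝ) * (ρ - dist y x)) with ⟨he, _⟩ | ⟨he, _⟩
      · rw [he] at h1; exact absurd h1 (lt_irrefl 0)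
      · rwa [he] at h1
    have h3 : 0 < ρ - dist y x := by
      by_contra h
      push_neg at h
      exact absurd h2 (not_lt.mpr (mul_nonpos_of_nonneg_of_nonpos (Nat.cast_nonneg k) h))
    exact Metric.mem_closedBall.mpr (by linarith)

lemma phik_testfun (A : Set (Rn n)) (hAo : IsOpen A) (hAb : Bornology.IsBounded A)
    (ρ : ℝ) (k : ℕ) (x : Rn n) :
    Continuous (phik A ρ k x) ∧ HasCompactSupport (phik A ρ k x) ∧
      tsupport (phik A ρ k x) ⊆ A := by
  set S : Set (Rn n) :=
    {y : Rn n | (1 : ℝ) ≤ (k : ℝ) * Metric.infDist y Aᶜ} ∩ Metric.closedBall x ρ with hS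
  have hSc : IsClosed S :=
    (isClosed_le continuous_const (continuous_const.mul (Metric.continuous_infDist_pt Aᶜ))).inter
      Metric.isClosed_closedBall
  have hSb : Bornology.IsBounded S :=
    (Metric.isBounded_closedBall (x := x) (r := ρ)).subset Set.inter_subset_right
  have hScomp : IsCompact S := Metric.isCompact_of_isClosed_isBounded hSc hSb
  have hts : tsupport (phik A ρ k x) ⊆ S :=
    closure_minimal (support_phik A ρ k x) hSc
  have hSA : S ⊆ A := by
    rintro y ⟨h1, _⟩
    simp only [Set.mem_setOf_eq] at h1
    by_contra hy
    have : Metric.infDist y Aᶜ = 0 := Metric.infDist_zero_of_mem hy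
    rw [this, mul_zero] at h1
    linarith
  exact ⟨continuous_phik_y A ρ k x, hScomp.of_isClosed_subset (isClosed_tsupport _) hts,
    hts.trans hSA⟩

lemma phik_tendsto (A : Set (Rn n)) (hAo : IsOpen A) (hAc : Aᶜ.Nonempty)
    (ρ : ℝ) (x y : Rn n) :
    Tendsto (fun k => phik A ρ k x y) atTop
      (𝓝 (Set.indicator (A ∩ ball x ρ) (fun _ => (1 : ℝ)) y)) := by
  by_cases hy : y ∈ A ∩ ball x ρ
  · rw [Set.indicator_of_mem hy]
    have hd : 0 < Metric.infDist y Aᶜ :=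
      (hAo.isClosed_compl.notMem_iff_infDist_pos hAc).mp (by simpa using hy.1)
    have ht : 0 < ρ - dist y x := by
      have := Metric.mem_ball.mp hy.2
      linarith
    apply Tendsto.congr' ?_ (tendsto_const_nhds (x := (1 : ℝ)))
    have h1 := (tendsto_natCast_atTop_atTop (R := ℝ)).eventually_ge_atTop
      (max (2 / Metric.infDist y Aᶜ) (2 / (ρ - dist y x)))
    filter_upwards [h1] with k hk1
    have hk2 : 2 / Metric.infDist y Aᶜ ≤ (k : ℝ) := le_trans (le_max_left _ _) hk1
    have hk3 : 2 / (ρ - dist y x) ≤ (k : ℝ) := le_trans (le_max_right _ _) hk1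
    have hg2 : (2 : ℝ) ≤ (k : ℝ) * Metric.infDist y Aᶜ := by
      rw [div_le_iff₀ hd] at hk2; linarith
    have hh2 : (2 : ℝ) ≤ (k : ℝ) * (ρ - dist y x) := by
      rw [div_le_iff₀ ht] at hk3; linarith
    have hgk : gk A k y = 1 := by
      have : max 0 ((k : ℝ) * Metric.infDist y Aᶜ - 1) = (k : ℝ) * Metric.infDist y Aᶜ - 1 :=
        max_eq_right (by linarith)
      rw [gk, this]
      exact min_eq_left (by linarith)
    have hhk : hk ρ k (dist y x) = 1 := by
      have : max 0 ((k : ℝ) * (ρ - dist y x)) = (k : ℝ) * (ρ - dist y x) :=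
        max_eq_right (by linarith)
      rw [hk, this]
      exact min_eq_left (by linarith)
    simp [phik, hgk, hhk]
  · rw [Set.indicator_of_notMem hy]
    have hz : ∀ k, phik A ρ k x y = 0 := by
      intro k
      by_cases hyA : y ∈ A
      · have hdy : ρ - dist y x ≤ 0 := by
          have : ¬ dist y x < ρ := fun h => hy ⟨hyA, Metric.mem_ball.mpr h⟩
          linarith [not_lt.mp this]
        have : hk ρ k (dist y x) = 0 := by
          rw [hk, max_eq_left (mul_nonpos_of_nonneg_of_nonpos (Nat.cast_nonneg k) hdy)]
          simp
        simp [phik, this]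
      · have : Metric.infDist y Aᶜ = 0 := Metric.infDist_zero_of_mem hyA
        have hg0 : gk A k y = 0 := by
          rw [gk, this, mul_zero]
          norm_num
        simp [phik, hg0]
    simp only [hz]
    exact tendsto_const_nhds

lemma continuous_sInt_phik (A : Set (Rn n)) (ρ : ℝ) (σ : SignedMeasure (Rn n)) (k : ℕ) :
    Continuous fun x : Rn n => sInt σ (phik A ρ k x) := by
  unfold sInt
  apply Continuous.sub <;>
  · refine continuous_of_dominated
      (fun x => (continuous_phik_y A ρ k x).aestronglyMeasurable)
      (fun x => ae_of_all _ fun y => ?_) (integrable_const 1)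
      (ae_of_all _ fun y => continuous_phik_x A ρ k y)
    rw [Real.norm_eq_abs]
    exact abs_phik_le_one A ρ k x y

lemma tendsto_sInt_phik (A : Set (Rn n)) (hAo : IsOpen A) (hAc : Aᶜ.Nonempty)
    (ρ : ℝ) (σ : SignedMeasure (Rn n)) (x : Rn n) :
    Tendsto (fun k => sInt σ (phik A ρ k x)) atTop (𝓝 (σ (A ∩ ball x ρ))) := by
  have hU : MeasurableSet (A ∩ ball x ρ) := (hAo.inter isOpen_ball).measurableSet
  have key : ∀ (μ : Measure (Rn n)) [IsFiniteMeasure μ],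
      Tendsto (fun k => ∫ y, phik A ρ k x y ∂μ) atTop (𝓝 ((μ (A ∩ ball x ρ)).toReal)) := by
    intro μ _
    have h := MeasureTheory.tendsto_integral_of_dominated_convergence
      (F := fun k y => phik A ρ k x y)
      (f := Set.indicator (A ∩ ball x ρ) (fun _ => (1 : ℝ))) (bound := fun _ => 1) (μ := μ)
      (fun k => (continuous_phik_y A ρ k x).aestronglyMeasurable)
      (integrable_const 1)
      (fun k => ae_of_all _ fun y => by
        rw [Real.norm_eq_abs]; exact abs_phik_le_one A ρ k x y)
      (ae_of_all _ fun y => phik_tendsto A hAo hAc ρ x y)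
    rwa [integral_indicator_const (1 : ℝ) hU, smul_eq_mul, mul_one] at h
  have hσ : σ (A ∩ ball x ρ) =
      (σ.toJordanDecomposition.posPart (A ∩ ball x ρ)).toReal -
        (σ.toJordanDecomposition.negPart (A ∩ ball x ρ)).toReal := by
    conv_lhs => rw [← σ.toSignedMeasure_toJordanDecomposition]
    rw [JordanDecomposition.toSignedMeasure, VectorMeasure.sub_apply,
      Measure.toSignedMeasure_apply_measurable hU, Measure.toSignedMeasure_apply_measurable hU]
    rfl
  rw [hσ]
  exact ((key _).sub (key _))

end BallMeasAux

/-- (A.13): joint measurability of `(x,μ) ↦ μ(A ∩ B_ρ(x))`. -/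
theorem vector_measure_ball_measurable
    (n m : ℕ) [NeZero n] (hn : 2 ≤ n) (hm : 1 ≤ m)
    (A : Set (Rn n)) (hAo : IsOpen A) (hAb : Bornology.IsBounded A)
    (R : ℝ) (hR : 0 < R) (ρ : ℝ) (hρ : 0 < ρ) :
    Measurable fun q : A × MR n m A R => q.2.1 (A ∩ ball (q.1 : Rn n) ρ) := by
  classical
  have hAc : Aᶜ.Nonempty := by
    by_contra h
    rw [Set.not_nonempty_iff_eq_empty, Set.compl_empty_iff] at h
    rw [h] at hAb
    obtain ⟨r, hr⟩ := hAb.subset_closedBall 0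
    set v : Rn n := EuclideanSpace.single (⟨0, NeZero.pos n⟩ : Fin n) (max r 0 + 1) with hv
    have hvnorm : ‖v‖ = max r 0 + 1 := by
      rw [hv, EuclideanSpace.norm_single, Real.norm_of_nonneg (by positivity)]
    have hvm : v ∈ Metric.closedBall (0 : Rn n) r := hr (Set.mem_univ v)
    rw [Metric.mem_closedBall, dist_zero_right, hvnorm] at hvm
    have : r ≤ max r 0 := le_max_left r 0
    linarith
  haveI : BorelSpace (MR n m A R) := ⟨rfl⟩
  refine measurable_pi_lambda _ fun i => measurable_pi_lambda _ fun j => ?_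
  have hmeask : ∀ k : ℕ, Measurable fun q : A × MR n m A R =>
      sInt (vComp q.2.1 i j) (BallMeasAux.phik A ρ k (q.1 : Rn n)) := by
    intro k
    have hcont_x : ∀ μ : MR n m A R, Continuous fun x : A =>
        sInt (vComp μ.1 i j) (BallMeasAux.phik A ρ k (x : Rn n)) :=
      fun μ => (BallMeasAux.continuous_sInt_phik A ρ _ k).comp continuous_subtype_val
    have hmeas_mu : ∀ x : A, Measurable fun μ : MR n m A R =>
        sInt (vComp μ.1 i j) (BallMeasAux.phik A ρ k (x : Rn n)) := by
      intro x
      have hcont : Continuous fun μ : MR n m A R =>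
          sInt (vComp μ.1 i j) (BallMeasAux.phik A ρ k (x : Rn n)) := by
        have heq : (fun μ : MR n m A R =>
            sInt (vComp μ.1 i j) (BallMeasAux.phik A ρ k (x : Rn n))) =
          (fun F : (Fin m × Fin n × TestFun A) → ℝ =>
             F (i, j, ⟨BallMeasAux.phik A ρ k (x : Rn n),
                BallMeasAux.phik_testfun A hAo hAb ρ k (x : Rn n)⟩))
          ∘ (fun μ : MR n m A R => fun q : Fin m × Fin n × TestFun A =>
              sInt (vComp μ.1 q.1 q.2.1) q.2.2.1) := rfl
        rw [heq]
        exact (continuous_apply _).comp continuous_induced_dom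
      exact hcont.measurable
    exact measurable_uncurry_of_continuous_of_measurable
      (u := fun (x : A) (μ : MR n m A R) =>
        sInt (vComp μ.1 i j) (BallMeasAux.phik A ρ k (x : Rn n)))
      (fun μ => hcont_x μ) (fun x => hmeas_mu x)
  have hlim : Tendsto (fun k (q : A × MR n m A R) =>
      sInt (vComp q.2.1 i j) (BallMeasAux.phik A ρ k (q.1 : Rn n))) atTop
      (𝓝 fun q : A × MR n m A R => q.2.1 (A ∩ ball (q.1 : Rn n) ρ) i j) := by
    rw [tendsto_pi_nhds]
    intro q
    have h := BallMeasAux.tendsto_sInt_phik A hAo hAc ρ (vComp q.2.1 i j) (q.1 : Rn n)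
    have hval : vComp q.2.1 i j (A ∩ ball (q.1 : Rn n) ρ)
        = q.2.1 (A ∩ ball (q.1 : Rn n) ρ) i j := rfl
    rwa [hval] at h
  exact measurable_of_tendsto_metrizable hmeask hlim
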